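/- Let C be a binary code of length n with minimum Hamming distance d_min, let m be an integer with n < m ≤ 2^{⌊log₂ n⌋+1}, let a be a residue modulo m, and let d be a natural number with 2d < d_min. Suppose that for every c ∈ C there is a binary word x_c of length n with σ(x_c) ≡ a (mod m) and d_H(c, x_c) ≤ d. Then the map c ↦ x_c is injective, the set {x_c : c ∈ C} has minimum Hamming distance at least d_min − 2d, and all of its elements lie in a single residue class of σ modulo m; consequently (since m > n) any two distinct words x_c, x_{c'}, viewed as lists of bits, have no common subsequence of length n − 1, i.e., the code {x_c : c ∈ C} corrects a single deletion. -/

import Mathlib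

/-- List version of the moment. -/
def momL : List Bool → ℕ
  | [] => 0
  | b :: t => (b :: t).count true + momL t

lemma momL_cons (b : Bool) (t : List Bool) :
    momL (b :: t) = (if b then 1 else 0) + t.count true + momL t := by
  simp [momL, List.count_cons]; cases b <;> simp <;> omega

lemma momL_append (a l : List Bool) :
    momL (a ++ l) = momL a + a.length * l.count true + momL l := by
  induction a with
  | nil => simp [momL]
  | cons b t ih => simp [momL_cons, ih, List.count_append]; ring

lemma momL_insert (a : List Bool) (b : Bool) (c : List Bool) :
    momL (a ++ b :: c) = momL (a ++ c) + (a.length + 1) * (if b then 1 else 0)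
      + c.count true := by
  rw [momL_append, momL_append, momL_cons, List.count_cons]
  cases b <;> simp <;> ring

lemma core (a mid c : List Bool) (b b' : Bool)
    (h : momL (a ++ b :: (mid ++ c)) = momL (a ++ mid ++ b' :: c)) :
    a ++ b :: (mid ++ c) = a ++ mid ++ b' :: c := by
  have h1 := momL_insert a b (mid ++ c)
  have h2 := momL_insert (a ++ mid) b' c
  rw [h1, h2] at h
  simp only [List.count_append, List.length_append, List.append_assoc] at h
  have hE : (a.length + 1) * (if b then 1 else 0) + mid.count true
      = (a.length + mid.length + 1) * (if b' then 1 else 0) := by omega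
  have hcle := List.count_le_length (a := true) (l := mid)
  have hall : b = b' ∧ ∀ x ∈ mid, x = b := by
    cases b <;> cases b' <;> simp at hE <;> try omega
    · refine ⟨rfl, fun x hx => ?_⟩
      have : true ∉ mid := List.count_eq_zero.mp hE
      cases x
      · rfl
      · exact absurd hx this
    · refine ⟨rfl, fun x hx => ?_⟩
      have hlen : mid.count true = mid.length := by omega
      exact (List.count_eq_length.mp hlen x hx).symm
  obtain ⟨hbb, hmem⟩ := hall
  subst hbb
  have hrep : mid = List.replicate mid.length b := List.eq_replicate_of_mem hmem
  have hkey : b :: mid = mid ++ [b] := by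
    conv_lhs => rw [hrep]
    conv_rhs => rw [hrep]
    rw [← List.replicate_succ, List.replicate_succ']
  calc a ++ b :: (mid ++ c) = a ++ (b :: mid) ++ c := by simp
    _ = a ++ (mid ++ [b]) ++ c := by rw [hkey]
    _ = a ++ mid ++ b :: c := by simp

lemma uniq {a1 a2 c1 c2 : List Bool} (b b' : Bool) (hw : a1 ++ a2 = c1 ++ c2)
    (hσ : momL (a1 ++ b :: a2) = momL (c1 ++ b' :: c2)) :
    a1 ++ b :: a2 = c1 ++ b' :: c2 := by
  rcases List.append_eq_append_iff.mp hw with ⟨mid, h1, h2⟩ | ⟨mid, h1, h2⟩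
  · subst h1; subst h2
    exact core a1 mid c2 b b' hσ
  · subst h1; subst h2
    exact (core c1 mid a2 b' b hσ.symm).symm

lemma count_true_eq (l : List Bool) :
    l.count true = ∑ i : Fin l.length, (if l.get i then 1 else 0) := by
  induction l with
  | nil => simp
  | cons b t ih =>
    simp only [List.length_cons]
    rw [Fin.sum_univ_succ, List.count_cons]
    simp only [List.get, ih, Fin.eta]
    cases b <;> simp [add_comm]

lemma momL_eq (l : List Bool) :
    momL l = ∑ i : Fin l.length, ((i : ℕ) + 1) * (if l.get i then 1 else 0) := by
  induction l with
  | nil => simp [momL]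
  | cons b t ih =>
    simp only [List.length_cons]
    rw [Fin.sum_univ_succ]
    simp only [momL, List.count_cons, List.get, ih, count_true_eq, Fin.val_succ,
      Fin.val_zero, Fin.eta]
    have hs : (∑ x : Fin t.length, ((x:ℕ)+1+1)*(if t.get x then 1 else 0)) =
        (∑ i : Fin t.length, ((i:ℕ)+1)*(if t.get i then 1 else 0))
          + ∑ i : Fin t.length, (if t.get i then 1 else 0) := by
      rw [← Finset.sum_add_distrib]; exact Finset.sum_congr rfl fun i _ => by ring
    rw [show (∑ x : Fin t.length, ((x:ℕ)+1+1)*(if (b :: t).get x.succ then 1 else 0)) =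
      ∑ x : Fin t.length, ((x:ℕ)+1+1)*(if t.get x then 1 else 0) from rfl, hs]
    cases b <;> simp <;> ring

lemma exists_delete {w l : List Bool} (h : w.Sublist l) (hl : w.length + 1 = l.length) :
    ∃ a b c, l = a ++ b :: c ∧ w = a ++ c := by
  induction h with
  | slnil => simp at hl
  | cons b h ih =>
    exact ⟨[], b, _, rfl, by simpa using h.eq_of_length (by simpa using hl)⟩
  | cons_cons b h ih =>
    obtain ⟨a, bb, c, h1, h2⟩ := ih (by simpa using hl)
    exact ⟨b :: a, bb, c, by simp [h1], by simp [h2]⟩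

/-- The moment of a binary word `x = x_1 … x_n`: `σ(x) = ∑ i, i * x_i` (1-based indexing). -/
def mom {n : ℕ} (x : Fin n → Bool) : ℕ :=
  ∑ i : Fin n, ((i : ℕ) + 1) * (if x i then 1 else 0)

lemma mom_eq_momL {n : ℕ} (x : Fin n → Bool) : mom x = momL (List.ofFn x) := by
  rw [momL_eq, mom, ← Fin.sum_congr' _ (List.length_ofFn : (List.ofFn x).length = n).symm]
  apply Finset.sum_congr rfl
  intro i _
  simp [List.get_ofFn]

/-- Moment-balancing by at most `d` flips per codeword (with `2d < d_min`
and `n < m ≤ 2^(⌊log₂ n⌋+1)`) is injective, the balanced code has minimum Hamming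
distance at least `d_min − 2d`, all its words lie in one residue class of `σ` mod `m`,
and (since `m > n`) distinct balanced words have no common subsequence of length
`n − 1`, i.e. the balanced code corrects a single deletion. -/
theorem stmt2 {n : ℕ} (C : Set (Fin n → Bool)) (dmin d m a : ℕ)
    (hmin : ∀ c ∈ C, ∀ c' ∈ C, c ≠ c' → dmin ≤ hammingDist c c')
    (hd : 2 * d < dmin) (hm1 : n < m) (hm2 : m ≤ 2 ^ (Nat.log 2 n + 1))
    (x : (Fin n → Bool) → (Fin n → Bool))
    (hx : ∀ c ∈ C, mom (x c) ≡ a [MOD m] ∧ hammingDist c (x c) ≤ d) :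
    Set.InjOn x C ∧
    (∀ c ∈ C, ∀ c' ∈ C, c ≠ c' → dmin - 2 * d ≤ hammingDist (x c) (x c')) ∧
    (∀ c ∈ C, ∀ c' ∈ C, mom (x c) ≡ mom (x c') [MOD m]) ∧
    (∀ c ∈ C, ∀ c' ∈ C, c ≠ c' →
      ¬ ∃ w : List Bool, w.length = n - 1 ∧
        w.Sublist (List.ofFn (x c)) ∧ w.Sublist (List.ofFn (x c'))) := by
  have hdist : ∀ c ∈ C, ∀ c' ∈ C, c ≠ c' →
      dmin - 2 * d ≤ hammingDist (x c) (x c') := by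
    intro c hc c' hc' hne
    have h1 := (hx c hc).2
    have h2 := (hx c' hc').2
    have h0 := hmin c hc c' hc' hne
    have t1 := hammingDist_triangle c (x c) c'
    have t2 := hammingDist_triangle (x c) (x c') c'
    rw [hammingDist_comm (x c') c'] at t2
    omega
  have hmom : ∀ c ∈ C, ∀ c' ∈ C, mom (x c) ≡ mom (x c') [MOD m] := by
    intro c hc c' hc'
    exact ((hx c hc).1).trans ((hx c' hc').1).symm
  refine ⟨?_, hdist, hmom, ?_⟩
  · intro c hc c' hc' heq
    by_contra hne
    have := hdist c hc c' hc' hne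
    rw [heq, hammingDist_self] at this
    omega
  · rintro c hc c' hc' hne ⟨w, hwlen, hw1, hw2⟩
    have hxne : x c ≠ x c' := by
      intro he
      have := hdist c hc c' hc' hne
      rw [he, hammingDist_self] at this
      omega
    have hn : n ≠ 0 := by
      rintro rfl
      exact hxne (funext fun i => i.elim0)
    have hlen1 : w.length + 1 = (List.ofFn (x c)).length := by
      simp [hwlen]; omega
    have hlen2 : w.length + 1 = (List.ofFn (x c')).length := by
      simp [hwlen]; omega
    obtain ⟨a1, b1, c1, hy, hwy⟩ := exists_delete hw1 hlen1
    obtain ⟨a2, b2, c2, hz, hwz⟩ := exists_delete hw2 hlen2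
    -- moments
    have e1 : momL (List.ofFn (x c)) = momL (a1 ++ c1)
        + ((a1.length + 1) * (if b1 then 1 else 0) + c1.count true) := by
      rw [hy, momL_insert]; ring
    have e2 : momL (List.ofFn (x c')) = momL (a2 ++ c2)
        + ((a2.length + 1) * (if b2 then 1 else 0) + c2.count true) := by
      rw [hz, momL_insert]; ring
    have hbase : momL (a1 ++ c1) = momL (a2 ++ c2) := by rw [← hwy, ← hwz]
    set t1 := (a1.length + 1) * (if b1 then 1 else 0) + c1.count true with ht1
    set t2 := (a2.length + 1) * (if b2 then 1 else 0) + c2.count true with ht2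
    have hb1 : t1 ≤ n := by
      have hc1 : c1.count true ≤ c1.length := List.count_le_length (a := true) (l := c1)
      have hlen : a1.length + 1 + c1.length = n := by
        have := congrArg List.length hy
        simp at this
        omega
      cases b1 <;> simp [ht1] <;> omega
    have hb2 : t2 ≤ n := by
      have hc2 : c2.count true ≤ c2.length := List.count_le_length (a := true) (l := c2)
      have hlen : a2.length + 1 + c2.length = n := by
        have := congrArg List.length hz
        simp at this
        omega
      cases b2 <;> simp [ht2] <;> omega
    have hcong : momL (a1 ++ c1) + t1 ≡ momL (a1 ++ c1) + t2 [MOD m] := by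
      have := hmom c hc c' hc'
      rw [mom_eq_momL, mom_eq_momL, e1, e2, ← hbase] at this
      exact this
    have ht : t1 = t2 := by
      have h := Nat.ModEq.add_left_cancel' (momL (a1 ++ c1)) hcong
      calc t1 = t1 % m := (Nat.mod_eq_of_lt (lt_of_le_of_lt hb1 hm1)).symm
        _ = t2 % m := h
        _ = t2 := Nat.mod_eq_of_lt (lt_of_le_of_lt hb2 hm1)
    have hmeq : momL (List.ofFn (x c)) = momL (List.ofFn (x c')) := by
      rw [e1, e2, hbase, ht]
    have hlists : List.ofFn (x c) = List.ofFn (x c') := by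
      rw [hy, hz]
      exact uniq b1 b2 (hwy ▸ hwz ▸ rfl) (by rw [← hy, ← hz]; exact hmeq)
    exact hxne (List.ofFn_injective hlists)
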